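/- Let f(z) = ∑_{n≥0} a_n z^n be analytic on the open unit ball B_{<1} of F, with f(0) = 0 and |f(z)| ≤ 1 for all z with |z| < 1. Then |f(z)| ≤ |z| for all z with |z| < 1, and |f'(0)| = |a_1| ≤ 1. -/

import Mathlib

open Filter Topology

variable {F : Type*} [NontriviallyNormedField F]

/-- Value of the power series with coefficients `a` at `z`. -/
noncomputable def psEval (a : ℕ → F) (z : F) : F := ∑' n : ℕ, a n * z ^ n

/-- Value of the Laurent series with coefficients `c` at `z`. -/
noncomputable def lEval (c : ℤ → F) (z : F) : F := ∑' n : ℤ, c n * z ^ n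

/-- Gauss norm `|f|_r = sup_n |a_n| r^n` of a power series. -/
noncomputable def pNorm (a : ℕ → F) (r : ℝ) : ℝ := ⨆ n : ℕ, ‖a n‖ * r ^ n

/-- Gauss norm `|f|_r = sup_n |c_n| r^n` of a Laurent series. -/
noncomputable def lNorm (c : ℤ → F) (r : ℝ) : ℝ := ⨆ n : ℤ, ‖c n‖ * r ^ n

/-- The Laurent series `c` is analytic on the annulus `A[r1,r2]`. -/
def LaurentOn (c : ℤ → F) (r1 r2 : ℝ) : Prop :=
  ∀ r : ℝ, r1 ≤ r → r ≤ r2 → Tendsto (fun n : ℤ => ‖c n‖ * r ^ n) cofinite (nhds 0)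

/-- The Laurent series `c` is analytic on `A[r1,∞)`. -/
def LaurentOnInfty (c : ℤ → F) (r1 : ℝ) : Prop :=
  ∀ r : ℝ, r1 ≤ r → Tendsto (fun n : ℤ => ‖c n‖ * r ^ n) cofinite (nhds 0)

/-- The power series `a` is analytic on the closed ball `B_{≤ r}`. -/
def PSOnClosed (a : ℕ → F) (r : ℝ) : Prop :=
  Tendsto (fun n : ℕ => ‖a n‖ * r ^ n) atTop (nhds 0)

/-- The power series `a` is analytic on the open ball `B_{< R}`. -/
def PSOnOpen (a : ℕ → F) (R : ℝ) : Prop :=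
  ∀ r : ℝ, 0 < r → r < R → Tendsto (fun n : ℕ => ‖a n‖ * r ^ n) atTop (nhds 0)

/-- The power series `a` is entire: it converges on all of `F`. -/
def Entire (a : ℕ → F) : Prop :=
  ∀ r : ℝ, 0 < r → Tendsto (fun n : ℕ => ‖a n‖ * r ^ n) atTop (nhds 0)

/-- `k(f,r)` for a Laurent series. -/
noncomputable def kk (c : ℤ → F) (r : ℝ) : ℤ := sInf {n : ℤ | ‖c n‖ * r ^ n = lNorm c r}

/-- `K(f,r)` for a Laurent series. -/
noncomputable def KK (c : ℤ → F) (r : ℝ) : ℤ := sSup {n : ℤ | ‖c n‖ * r ^ n = lNorm c r}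

/-- Product of two Laurent series. -/
noncomputable def laurentMul (c d : ℤ → F) : ℤ → F := fun n => ∑' i : ℤ, c i * d (n - i)

/-- The Laurent series `1`. -/
noncomputable def laurentOne : ℤ → F := fun n => if n = 0 then 1 else 0

/-- Gauss norm of a polynomial. -/
noncomputable def pgNorm (P : Polynomial F) (r : ℝ) : ℝ := ⨆ n : ℕ, ‖P.coeff n‖ * r ^ n

/-- `k(P,r)` for a polynomial. -/
noncomputable def kP (P : Polynomial F) (r : ℝ) : ℕ :=
  sInf {n : ℕ | ‖P.coeff n‖ * r ^ n = pgNorm P r}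

/-- `K(P,r)` for a polynomial. -/
noncomputable def KP (P : Polynomial F) (r : ℝ) : ℕ :=
  sSup {n : ℕ | ‖P.coeff n‖ * r ^ n = pgNorm P r}

/-- A polynomial regarded as a Laurent series. -/
noncomputable def polyToLaurent (P : Polynomial F) : ℤ → F :=
  fun n => if 0 ≤ n then P.coeff n.toNat else 0

/-- `f` vanishes to order exactly `m` at `z0`, as witnessed by a convergent local
power series expansion of `f` about `z0`. -/
def HasOrderAt (f : F → F) (z0 : F) (m : ℕ) : Prop :=
  ∃ δ > (0 : ℝ), ∃ b : ℕ → F,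
    (∀ z : F, ‖z - z0‖ < δ → f z = ∑' n : ℕ, b n * (z - z0) ^ n) ∧
    (∀ j < m, b j = 0) ∧ b m ≠ 0

/-- Order of vanishing at `0` of a power series. -/
noncomputable def ord0 (c : ℕ → F) : ℕ := sInf {n : ℕ | c n ≠ 0}

/-- Radius of convergence of a power series: the sup of the radii `r` such that
the terms `|c_j| r^j` tend to `0`. -/
noncomputable def convRadius (c : ℕ → F) : ENNReal :=
  ⨆ (r : NNReal) (_ : Tendsto (fun j : ℕ => ‖c j‖ * (r : ℝ) ^ j) atTop (nhds 0)), (r : ENNReal)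

section SchwarzAux

open Polynomial IsUltrametricDist

variable {F : Type*} [NontriviallyNormedField F]

theorem aux_summable [CompleteSpace F] [IsUltrametricDist F] {g : ℕ → F}
    (h : Tendsto (fun n => ‖g n‖) atTop (nhds 0)) : Summable g := by
  rw [summable_iff_vanishing_norm]
  intro ε hε
  obtain ⟨N, hN⟩ := Filter.eventually_atTop.mp
    (h.eventually (gt_mem_nhds (show (0:ℝ) < ε/2 by linarith)))
  refine ⟨Finset.range N, fun t ht => ?_⟩
  have hle : ‖∑ n ∈ t, g n‖ ≤ ε/2 := by
    apply norm_sum_le_of_forall_le_of_nonneg (by linarith)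
    intro i hi
    refine (hN i ?_).le
    by_contra hiN
    exact (Finset.disjoint_left.mp ht hi) (Finset.mem_range.mpr (by omega))
  linarith

theorem aux_le_norm_add [IsUltrametricDist F] {A B : F} (h : ‖B‖ < ‖A‖) : ‖A‖ ≤ ‖A + B‖ := by
  have h1 : ‖A‖ ≤ max ‖A + B‖ ‖B‖ := by
    have h2 := norm_add_le_max (A + B) (-B)
    simpa using h2
  rcases max_cases ‖A + B‖ ‖B‖ with ⟨he, _⟩ | ⟨he, _⟩ <;> rw [he] at h1
  · exact h1
  · linarith

theorem aux_dense [IsAlgClosed F] {s : ℝ} (hs0 : 0 ≤ s) (hs1 : s < 1) :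
    ∃ c : F, s < ‖c‖ ∧ ‖c‖ < 1 := by
  obtain ⟨x, hx⟩ := NormedField.exists_one_lt_norm F
  obtain ⟨k, hk⟩ := exists_pow_lt_of_lt_one (show (0:ℝ) < ‖x‖⁻¹ by positivity) hs1
  have hxinv : ‖x‖⁻¹ < 1 := by
    rw [inv_lt_one_iff₀]; right; exact hx
  have hk0 : 0 < k := by
    rcases Nat.eq_zero_or_pos k with rfl | h
    · simp only [pow_zero] at hk; linarith
    · exact h
  obtain ⟨y, hy⟩ := IsAlgClosed.exists_pow_nat_eq x hk0
  have hynorm : ‖y‖ ^ k = ‖x‖ := by rw [← norm_pow, hy]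
  have hy1 : 1 < ‖y‖ := by
    by_contra hc; push_neg at hc
    have h3 : ‖y‖ ^ k ≤ 1 := pow_le_one₀ (norm_nonneg y) hc
    rw [hynorm] at h3; linarith
  have hy0 : (0:ℝ) < ‖y‖ := by linarith
  have hsy1 : s * ‖y‖ < 1 := by
    by_contra hc; push_neg at hc
    have h4 : (1:ℝ) ≤ (s * ‖y‖) ^ k := one_le_pow₀ hc
    rw [mul_pow, hynorm] at h4
    have h5 : s ^ k * ‖x‖ < ‖x‖⁻¹ * ‖x‖ :=
      mul_lt_mul_of_pos_right hk (by positivity)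
    rw [inv_mul_cancel₀ (by positivity)] at h5
    linarith
  refine ⟨y⁻¹, ?_, ?_⟩
  · rw [norm_inv]
    nlinarith [mul_inv_cancel₀ (ne_of_gt hy0), inv_pos.mpr hy0]
  · rw [norm_inv]
    rw [inv_lt_one_iff₀]; right; exact hy1

theorem aux_norm_one_of_pow {y : F} {q : ℕ} (hq : q ≠ 0) (h : y ^ q = 1) : ‖y‖ = 1 := by
  have hpow : ‖y‖ ^ q = 1 := by rw [← norm_pow, h, norm_one]
  rcases lt_trichotomy ‖y‖ 1 with hlt | heq | hgt
  · have := pow_lt_one₀ (norm_nonneg y) hlt hq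
    rw [hpow] at this; linarith
  · exact heq
  · have := one_lt_pow₀ hgt hq
    rw [hpow] at this; linarith

theorem aux_root_sub_one [IsUltrametricDist F] {q : ℕ} (hq : 2 ≤ q) (hqn : ‖(q : F)‖ = 1)
    {η : F} (hη : η ^ q = 1) (hne : η ≠ 1) : ‖η - 1‖ = 1 := by
  set t := η - 1 with ht
  have htne : t ≠ 0 := sub_ne_zero.mpr hne
  have hle1 : ‖t‖ ≤ 1 := by
    have h2 := norm_add_le_max η (-1)
    have hη1 : ‖η‖ = 1 := aux_norm_one_of_pow (by omega) hη
    simpa [ht, sub_eq_add_neg, hη1] using h2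
  refine le_antisymm hle1 ?_
  by_contra hc; push_neg at hc
  obtain ⟨m, rfl⟩ : ∃ m, q = m + 2 := ⟨q - 2, by omega⟩
  have h1 : (t + 1) ^ (m + 2) = 1 := by
    have : t + 1 = η := by rw [ht]; ring
    rw [this, hη]
  rw [add_pow] at h1
  simp only [one_pow, mul_one] at h1
  rw [Finset.sum_range_succ', Finset.sum_range_succ'] at h1
  simp only [zero_add, pow_zero, pow_one, Nat.choose_zero_right, Nat.choose_one_right,
    Nat.cast_one, one_mul, mul_one] at h1
  have h2 : t * ((m + 2 : ℕ) : F) = -∑ i ∈ Finset.range (m + 1), t ^ (i + 1 + 1) * (((m+2).choose (i + 1 + 1) : ℕ) : F) := by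
    linear_combination h1
  have h3 : ‖t * ((m + 2 : ℕ) : F)‖ = ‖t‖ := by
    rw [norm_mul, hqn, mul_one]
  have h4 : ‖∑ i ∈ Finset.range (m + 1), t ^ (i + 1 + 1) * (((m+2).choose (i + 1 + 1) : ℕ) : F)‖ ≤ ‖t‖ ^ 2 := by
    apply norm_sum_le_of_forall_le_of_nonneg (by positivity)
    intro i _
    rw [norm_mul, norm_pow]
    calc ‖t‖ ^ (i + 1 + 1) * ‖(((m+2).choose (i + 1 + 1) : ℕ) : F)‖
        ≤ ‖t‖ ^ (i + 1 + 1) * 1 := by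
          apply mul_le_mul_of_nonneg_left (norm_natCast_le_one F _) (by positivity)
      _ = ‖t‖ ^ (i + 1 + 1) := mul_one _
      _ ≤ ‖t‖ ^ 2 := pow_le_pow_of_le_one (norm_nonneg t) hle1 (by omega)
  have h5 : ‖t‖ ≤ ‖t‖ ^ 2 := by
    calc ‖t‖ = ‖t * ((m + 2 : ℕ) : F)‖ := h3.symm
      _ = ‖-∑ i ∈ Finset.range (m + 1), t ^ (i + 1 + 1) * (((m+2).choose (i + 1 + 1) : ℕ) : F)‖ := by rw [h2]
      _ = ‖∑ i ∈ Finset.range (m + 1), t ^ (i + 1 + 1) * (((m+2).choose (i + 1 + 1) : ℕ) : F)‖ := norm_neg _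
      _ ≤ ‖t‖ ^ 2 := h4
  have h6 : 0 < ‖t‖ := norm_pos_iff.mpr htne
  nlinarith

theorem aux_points [IsAlgClosed F] [IsUltrametricDist F] (N : ℕ) :
    ∃ x : ℕ → F, (∀ i, ‖x i‖ ≤ 1) ∧ ∀ i j, i ≠ j → i < N → j < N → ‖x i - x j‖ = 1 := by
  have hprime : ∃ q, N < q ∧ q.Prime ∧ ‖((q : ℕ) : F)‖ = 1 := by
    by_cases hp : ∃ p : ℕ, p.Prime ∧ ‖((p : ℕ) : F)‖ < 1
    · obtain ⟨p, hpp, hplt⟩ := hp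
      obtain ⟨q, hq1, hq2⟩ := Nat.exists_infinite_primes (max N p + 1)
      have hNlt : N < q := by
        have := le_max_left N p; omega
      have hplt2 : p < q := by
        have := le_max_right N p; omega
      refine ⟨q, hNlt, hq2, ?_⟩
      refine le_antisymm (norm_natCast_le_one F q) ?_
      by_contra hcon; push_neg at hcon
      have hpq : p ≠ q := by omega
      have hcop : Nat.Coprime p q := (Nat.coprime_primes hpp hq2).mpr hpq
      have hcopZ : IsCoprime (p : ℤ) (q : ℤ) := by
        rw [Int.isCoprime_iff_gcd_eq_one, Int.gcd_natCast_natCast]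
        exact hcop
      obtain ⟨u, v, huv⟩ := hcopZ
      have hone : ((u * (p:ℤ) + v * (q:ℤ) : ℤ) : F) = 1 := by rw [huv]; push_cast; ring
      have hbound : ‖((u * (p:ℤ) + v * (q:ℤ) : ℤ) : F)‖ < 1 := by
        push_cast
        refine lt_of_le_of_lt (norm_add_le_max _ _) ?_
        rw [max_lt_iff, norm_mul, norm_mul]
        constructor
        · calc ‖((u:ℤ) : F)‖ * ‖((p:ℕ) : F)‖ ≤ 1 * ‖((p:ℕ) : F)‖ := by
                apply mul_le_mul_of_nonneg_right (norm_intCast_le_one F u) (norm_nonneg _)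
            _ = ‖((p:ℕ) : F)‖ := one_mul _
            _ < 1 := hplt
        · calc ‖((v:ℤ) : F)‖ * ‖((q:ℕ) : F)‖ ≤ 1 * ‖((q:ℕ) : F)‖ := by
                apply mul_le_mul_of_nonneg_right (norm_intCast_le_one F v) (norm_nonneg _)
            _ = ‖((q:ℕ) : F)‖ := one_mul _
            _ < 1 := hcon
      rw [hone, norm_one] at hbound
      linarith
    · push_neg at hp
      obtain ⟨q, hq1, hq2⟩ := Nat.exists_infinite_primes (N + 1)
      exact ⟨q, by omega, hq2, le_antisymm (norm_natCast_le_one F q) (hp q hq2)⟩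
  obtain ⟨q, hNq, hqp, hqn⟩ := hprime
  have hq2 : 2 ≤ q := hqp.two_le
  have hq0 : ((q : ℕ) : F) ≠ 0 := by
    intro h; rw [h, norm_zero] at hqn; norm_num at hqn
  set f : F[X] := X ^ q - C 1 with hf
  have hfsep : f.Separable := separable_X_pow_sub_C 1 hq0 one_ne_zero
  have hcard : Fintype.card (f.rootSet F) = q := by
    rw [card_rootSet_eq_natDegree hfsep (IsAlgClosed.splits _), natDegree_X_pow_sub_C]
  have e : f.rootSet F ≃ Fin q := Fintype.equivFinOfCardEq hcard
  have hroot : ∀ y : f.rootSet F, (y : F) ^ q = 1 := by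
    rintro ⟨y, hy⟩
    rw [Polynomial.mem_rootSet] at hy
    have h2 := hy.2
    simp only [hf, map_sub, map_pow, aeval_X, aeval_C, Algebra.algebraMap_self, map_one,
      sub_eq_zero] at h2
    simpa using h2
  have hnorm1 : ∀ y : f.rootSet F, ‖(y : F)‖ = 1 :=
    fun y => aux_norm_one_of_pow (by omega) (hroot y)
  refine ⟨fun i => if h : i < q then ((e.symm ⟨i, h⟩ : f.rootSet F) : F) else 1, ?_, ?_⟩
  · intro i
    by_cases h : i < q
    · simp only [h, dif_pos]
      exact le_of_eq (hnorm1 _)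
    · simp [h]
  · intro i j hij hiN hjN
    have hiq : i < q := hiN.trans hNq
    have hjq : j < q := hjN.trans hNq
    simp only [hiq, hjq, dif_pos]
    set y : F := ((e.symm ⟨i, hiq⟩ : f.rootSet F) : F) with hy
    set z : F := ((e.symm ⟨j, hjq⟩ : f.rootSet F) : F) with hz
    have hyz : y ≠ z := by
      intro h
      apply hij
      have h2 : (e.symm ⟨i, hiq⟩ : f.rootSet F) = e.symm ⟨j, hjq⟩ := Subtype.coe_injective h
      have h3 : (⟨i, hiq⟩ : Fin q) = ⟨j, hjq⟩ := e.symm.injective h2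
      simpa using h3
    have hzn : ‖z‖ = 1 := hnorm1 _
    have hyn : ‖y‖ = 1 := hnorm1 _
    have hz0 : z ≠ 0 := by
      intro h; rw [h, norm_zero] at hzn; norm_num at hzn
    have hηq : (y * z⁻¹) ^ q = 1 := by
      rw [mul_pow, inv_pow, hroot (e.symm ⟨i, hiq⟩), hroot (e.symm ⟨j, hjq⟩)]
      norm_num
    have hηne : y * z⁻¹ ≠ 1 := by
      intro h
      apply hyz
      field_simp at h
      exact h
    have hkey := aux_root_sub_one hq2 hqn hηq hηne
    have hfactor : y - z = z * (y * z⁻¹ - 1) := by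
      field_simp
    rw [hfactor, norm_mul, hzn, one_mul, hkey]

theorem aux_coeff_bound [IsUltrametricDist F] :
    ∀ (d : ℕ) (P : Polynomial F) (x : ℕ → F) (t : ℝ), P.natDegree ≤ d →
    (∀ i, ‖x i‖ ≤ 1) → (∀ i j, i ≠ j → i ≤ d → j ≤ d → ‖x i - x j‖ = 1) →
    (∀ i, i ≤ d → ‖P.eval (x i)‖ ≤ t) → ∀ n, ‖P.coeff n‖ ≤ t := by
  intro d
  induction d with
  | zero =>
    intro P x t hdeg hx hxx hv n
    have hP : P = C (P.coeff 0) := Polynomial.eq_C_of_natDegree_le_zero hdeg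
    have h0 := hv 0 le_rfl
    rw [hP] at h0 ⊢
    rw [eval_C] at h0
    rcases Nat.eq_zero_or_pos n with rfl | hn
    · rwa [coeff_C_zero]
    · rw [coeff_C, if_neg (by omega)]
      simp only [norm_zero]
      exact le_trans (norm_nonneg _) h0
  | succ d ih =>
    intro P x t hdeg hx hxx hv n
    have ht0 : 0 ≤ t := le_trans (norm_nonneg _) (hv 0 (by omega))
    obtain ⟨Q, hQ⟩ := Polynomial.X_sub_C_dvd_sub_C_eval (a := x 0) (p := P)
    have hPeq : P = (X - C (x 0)) * Q + C (P.eval (x 0)) := by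
      rw [← hQ]; ring
    have hQdeg : Q.natDegree ≤ d := by
      rcases eq_or_ne Q 0 with rfl | hQ0
      · simp
      have hmul : ((X - C (x 0)) * Q).natDegree = 1 + Q.natDegree := by
        rw [natDegree_mul (X_sub_C_ne_zero _) hQ0, natDegree_X_sub_C]
      have hsub : (P - C (P.eval (x 0))).natDegree ≤ d + 1 := by
        refine le_trans (natDegree_sub_le _ _) ?_
        simp only [max_le_iff]
        exact ⟨hdeg, le_trans (natDegree_C _).le (by omega)⟩
      rw [hQ, hmul] at hsub
      omega
    have hQv : ∀ i, i ≤ d → ‖Q.eval (x (i + 1))‖ ≤ t := by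
      intro i hi
      have h1 : P.eval (x (i+1)) - P.eval (x 0) = (x (i+1) - x 0) * Q.eval (x (i+1)) := by
        have h2 := congrArg (Polynomial.eval (x (i+1))) hQ
        simpa using h2
      have hd1 : ‖x (i+1) - x 0‖ = 1 := hxx (i+1) 0 (by omega) (by omega) (by omega)
      have h3 : ‖Q.eval (x (i+1))‖ = ‖P.eval (x (i+1)) - P.eval (x 0)‖ := by
        rw [h1, norm_mul, hd1, one_mul]
      rw [h3, sub_eq_add_neg]
      refine le_trans (norm_add_le_max _ _) ?_
      rw [norm_neg]
      exact max_le (hv (i+1) (by omega)) (hv 0 (by omega))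
    have hQc : ∀ n, ‖Q.coeff n‖ ≤ t :=
      ih Q (fun i => x (i + 1)) t hQdeg (fun i => hx _)
        (fun i j hij hi hj => hxx (i+1) (j+1) (by omega) (by omega) (by omega)) hQv
    have hXQ : ∀ m, ‖((X - C (x 0)) * Q).coeff m‖ ≤ t := by
      intro m
      have hexp : (X - C (x 0)) * Q = X * Q - C (x 0) * Q := by ring
      rw [hexp, coeff_sub, sub_eq_add_neg]
      refine le_trans (norm_add_le_max _ _) (max_le ?_ ?_)
      · rcases Nat.eq_zero_or_pos m with rfl | hm
        · rw [mul_coeff_zero, coeff_X_zero, zero_mul, norm_zero]; exact ht0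
        · obtain ⟨m', rfl⟩ : ∃ m', m = m' + 1 := ⟨m - 1, by omega⟩
          rw [coeff_X_mul]
          exact hQc m'
      · rw [norm_neg, coeff_C_mul, norm_mul]
        calc ‖x 0‖ * ‖Q.coeff m‖ ≤ 1 * t :=
              mul_le_mul (hx 0) (hQc m) (norm_nonneg _) zero_le_one
          _ = t := one_mul t
    rw [hPeq, coeff_add]
    refine le_trans (norm_add_le_max _ _) (max_le (hXQ n) ?_)
    rw [coeff_C]
    rcases eq_or_ne n 0 with rfl | hn
    · rw [if_pos rfl]; exact hv 0 (by omega)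
    · rw [if_neg hn, norm_zero]; exact ht0

end SchwarzAux

/-- **Schwarz lemma.** If `f` is analytic on `B_{<1}`, `f(0) = 0` and `|f(z)| ≤ 1` for
all `|z| < 1`, then `|f(z)| ≤ |z|` for all `|z| < 1` and `|f'(0)| = |a₁| ≤ 1`. -/
theorem stmt4 {F : Type*} [NontriviallyNormedField F] [CompleteSpace F] [IsAlgClosed F]
    (hna : IsNonarchimedean (fun x : F => ‖x‖))
    (a : ℕ → F) (ha : PSOnOpen a 1)
    (h0 : psEval a 0 = 0)
    (hb : ∀ z : F, ‖z‖ < 1 → ‖psEval a z‖ ≤ 1) :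
    (∀ z : F, ‖z‖ < 1 → ‖psEval a z‖ ≤ ‖z‖) ∧ ‖a 1‖ ≤ 1 := by
    classical
  haveI : IsUltrametricDist F := IsUltrametricDist.isUltrametricDist_of_isNonarchimedean_norm hna
  have ha0 : a 0 = 0 := by
    have h1 : psEval a 0 = a 0 := by
      rw [psEval, tsum_eq_single 0]
      · simp
      · intro n hn
        rw [zero_pow hn, mul_zero]
    rw [h1] at h0; exact h0
  have key : ∀ c : F, 0 < ‖c‖ → ‖c‖ < 1 → ∀ n0, ‖a n0‖ * ‖c‖ ^ n0 ≤ 1 := by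
    intro c hc0 hc1 n0
    by_contra hgt; push_neg at hgt
    have htend := ha ‖c‖ hc0 hc1
    obtain ⟨N, hN⟩ := Filter.eventually_atTop.mp
      (htend.eventually (gt_mem_nhds (show (0:ℝ) < 1 by norm_num)))
    have hn0N : n0 < N := by
      by_contra hcon; push_neg at hcon
      exact absurd (hN n0 hcon) (by linarith)
    obtain ⟨x, hx1, hxd⟩ := aux_points (F := F) N
    set P : Polynomial F := ∑ n ∈ Finset.range N, Polynomial.monomial n (a n * c ^ n) with hP
    have hPco : ∀ m, P.coeff m = if m ∈ Finset.range N then a m * c ^ m else 0 := by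
      intro m
      rw [hP, Polynomial.finset_sum_coeff]
      simp only [Polynomial.coeff_monomial]
      exact Finset.sum_ite_eq' (Finset.range N) m (fun k => a k * c ^ k)
    have hPdeg : P.natDegree ≤ N - 1 := by
      apply Polynomial.natDegree_sum_le_of_forall_le
      intro i hi
      exact le_trans (Polynomial.natDegree_monomial_le _) (by
        simp only [Finset.mem_range] at hi; omega)
    have hPeval : ∀ u : F, P.eval u = ∑ n ∈ Finset.range N, a n * c ^ n * u ^ n := by
      intro u
      rw [hP, Polynomial.eval_finset_sum]
      simp [Polynomial.eval_monomial]
    have hTne : (Finset.range N).Nonempty := ⟨n0, Finset.mem_range.mpr hn0N⟩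
    have hTne' : ((Finset.range N).image fun i => ‖P.eval (x i)‖).Nonempty :=
      hTne.image _
    set t : ℝ := ((Finset.range N).image fun i => ‖P.eval (x i)‖).max' hTne' with hmax
    have hv : ∀ i, i ≤ N - 1 → ‖P.eval (x i)‖ ≤ t := by
      intro i hi
      apply Finset.le_max'
      exact Finset.mem_image.mpr ⟨i, Finset.mem_range.mpr (by omega), rfl⟩
    have hcb := aux_coeff_bound (N - 1) P x t hPdeg hx1
      (fun i j hij hi hj => hxd i j hij (by omega) (by omega)) hv n0
    rw [hPco n0, if_pos (Finset.mem_range.mpr hn0N), norm_mul, norm_pow] at hcb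
    have ht1 : 1 < t := lt_of_lt_of_le hgt hcb
    obtain ⟨i, hiN, hieq⟩ := Finset.mem_image.mp (Finset.max'_mem _ hTne')
    rw [Finset.mem_range] at hiN
    set z : F := c * x i with hzdef
    have hzc : ‖z‖ ≤ ‖c‖ := by
      rw [hzdef, norm_mul]
      calc ‖c‖ * ‖x i‖ ≤ ‖c‖ * 1 := mul_le_mul_of_nonneg_left (hx1 i) (norm_nonneg c)
        _ = ‖c‖ := mul_one _
    have hz1 : ‖z‖ < 1 := lt_of_le_of_lt hzc hc1
    have hbnd : ∀ n : ℕ, ‖a n * z ^ n‖ ≤ ‖a n‖ * ‖c‖ ^ n := by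
      intro n
      rw [norm_mul, norm_pow]
      exact mul_le_mul_of_nonneg_left (pow_le_pow_left₀ (norm_nonneg z) hzc n) (norm_nonneg _)
    have hsum : Summable (fun n => a n * z ^ n) :=
      aux_summable (squeeze_zero (fun n => norm_nonneg _) hbnd htend)
    have hsplit := Summable.sum_add_tsum_nat_add N hsum
    have hhead : ∑ n ∈ Finset.range N, a n * z ^ n = P.eval (x i) := by
      rw [hPeval]
      apply Finset.sum_congr rfl
      intro n _
      rw [hzdef, mul_pow]; ring
    have htail : ‖∑' n : ℕ, a (n + N) * z ^ (n + N)‖ ≤ 1 := by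
      apply IsUltrametricDist.norm_tsum_le_of_forall_le_of_nonneg zero_le_one
      intro n
      refine le_trans (hbnd (n + N)) (hN (n + N) (by omega)).le
    have hA : ‖Polynomial.eval (x i) P‖ = t := hieq.trans hmax.symm
    have hval : ‖psEval a z‖ ≥ t := by
      have hlt : ‖∑' (n : ℕ), a (n + N) * z ^ (n + N)‖ < ‖Polynomial.eval (x i) P‖ := by
        rw [hA]; linarith
      have h6 := aux_le_norm_add hlt
      rw [psEval, ← hsplit, hhead, ge_iff_le, ← hA]
      exact h6
    have := hb z hz1
    linarith
  have hcoef : ∀ n, ‖a n‖ ≤ 1 := by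
    intro n
    by_contra hcon; push_neg at hcon
    rcases Nat.eq_zero_or_pos n with rfl | hn
    · rw [ha0, norm_zero] at hcon; linarith
    have han0 : (0:ℝ) < ‖a n‖ := by linarith
    set s : ℝ := (‖a n‖)⁻¹ ^ ((n:ℝ)⁻¹) with hs
    have hinv1 : (‖a n‖)⁻¹ < 1 := by
      rw [inv_lt_one_iff₀]; right; exact hcon
    have hinv0 : (0:ℝ) < (‖a n‖)⁻¹ := by positivity
    have hs0 : 0 ≤ s := Real.rpow_nonneg hinv0.le _
    have hs1 : s < 1 :=
      Real.rpow_lt_one hinv0.le hinv1 (by positivity)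
    have hspow : s ^ n = (‖a n‖)⁻¹ := by
      rw [hs, ← Real.rpow_natCast ((‖a n‖)⁻¹ ^ ((n:ℝ)⁻¹)) n, ← Real.rpow_mul hinv0.le]
      rw [inv_mul_cancel₀ (Nat.cast_ne_zero.mpr (by omega) : ((n:ℕ):ℝ) ≠ 0)]
      exact Real.rpow_one _
    obtain ⟨c, hc1, hc2⟩ := aux_dense (F := F) hs0 hs1
    have hc0 : 0 < ‖c‖ := lt_of_le_of_lt hs0 hc1
    have hklt : s ^ n < ‖c‖ ^ n := pow_lt_pow_left₀ hc1 hs0 (by omega)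
    have h2 : 1 < ‖a n‖ * ‖c‖ ^ n := by
      have h3 : ‖a n‖ * s ^ n = 1 := by
        rw [hspow, mul_inv_cancel₀ han0.ne']
      nlinarith
    exact absurd (key c hc0 hc2 n) (by linarith)
  refine ⟨?_, hcoef 1⟩
  intro z hz
  rcases eq_or_ne z 0 with rfl | hz0
  · simp [h0]
  rw [psEval]
  apply IsUltrametricDist.norm_tsum_le_of_forall_le_of_nonneg (norm_nonneg z)
  intro n
  rcases Nat.eq_zero_or_pos n with rfl | hn
  · simp [ha0]
  · rw [norm_mul, norm_pow]
    calc ‖a n‖ * ‖z‖ ^ n ≤ 1 * ‖z‖ ^ n :=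
          mul_le_mul_of_nonneg_right (hcoef n) (by positivity)
      _ = ‖z‖ ^ n := one_mul _
      _ ≤ ‖z‖ ^ 1 := pow_le_pow_of_le_one (norm_nonneg z) hz.le hn
      _ = ‖z‖ := pow_one _
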